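/- For bounded-variation paths X on [a,b], the signature of the reversed path X⁻¹ (traversing X backwards) is the tensor-algebra inverse of S(X): S(X) ⊗ S(X⁻¹) = 1 = (1, 0, 0, ...). It suffices to prove this for piecewise linear paths, where for a single linear segment with increment v, S = exp_⊗(v) and the reversed segment gives exp_⊗(−v), and exp_⊗(v) ⊗ exp_⊗(−v) = 1. -/

import Mathlib

open intervalIntegral MeasureTheory

/-- Signature coefficients of a path with derivative `σ'`, word head = earliest letter. -/
noncomputable def sig {d : ℕ} (σ' : ℝ → Fin d → ℝ) (b : ℝ) : List (Fin d) → ℝ → ℝ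
  | [], _ => 1
  | i :: w, t => ∫ s in t..b, σ' s i * sig σ' b w s

section
variable {d : ℕ} {σ' : ℝ → Fin d → ℝ} (hσ : ∀ i, Continuous fun t => σ' t i)

lemma sig_nil (b t : ℝ) : sig σ' b [] t = 1 := rfl

lemma sig_cons (b : ℝ) (i : Fin d) (w : List (Fin d)) (t : ℝ) :
    sig σ' b (i :: w) t = ∫ s in t..b, σ' s i * sig σ' b w s := rfl

include hσ in
lemma sig_cont2 (w : List (Fin d)) :
    Continuous fun p : ℝ × ℝ => sig σ' p.1 w p.2 := by
  induction w with
  | nil => simpa [sig_nil] using continuous_const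
  | cons i u ih =>
    have hint : Continuous (Function.uncurry
        (fun (p : ℝ × ℝ) (s : ℝ) => σ' s i * sig σ' p.1 u s)) := by
      apply Continuous.mul
      · exact (hσ i).comp continuous_snd
      · exact ih.comp ((continuous_fst.comp continuous_fst).prodMk continuous_snd)
    have h1 : Continuous fun p : ℝ × ℝ => ∫ s in (0:ℝ)..p.1, σ' s i * sig σ' p.1 u s :=
      continuous_parametric_intervalIntegral_of_continuous (μ := volume) hint continuous_fst
    have h2 : Continuous fun p : ℝ × ℝ => ∫ s in (0:ℝ)..p.2, σ' s i * sig σ' p.1 u s :=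
      continuous_parametric_intervalIntegral_of_continuous (μ := volume) hint continuous_snd
    have key : ∀ p : ℝ × ℝ, sig σ' p.1 (i :: u) p.2 =
        (∫ s in (0:ℝ)..p.1, σ' s i * sig σ' p.1 u s)
          - ∫ s in (0:ℝ)..p.2, σ' s i * sig σ' p.1 u s := by
      intro p
      rw [sig_cons]
      rw [integral_interval_sub_left] <;>
        exact (Continuous.intervalIntegrable (by
          exact ((hσ i).mul (ih.comp (by fun_prop : Continuous fun s : ℝ => ((p.1 : ℝ), s)))) ) _ _)
    simpa only [key] using h1.fun_sub h2

include hσ in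
lemma sig_cont_t (b : ℝ) (w : List (Fin d)) : Continuous fun t => sig σ' b w t :=
  (sig_cont2 hσ w).comp (by fun_prop : Continuous fun t : ℝ => ((b : ℝ), t))

include hσ in
lemma sig_cont_b (t : ℝ) (w : List (Fin d)) : Continuous fun b => sig σ' b w t :=
  (sig_cont2 hσ w).comp (by fun_prop : Continuous fun b : ℝ => ((b : ℝ), t))

lemma sig_same (c : ℝ) {w : List (Fin d)} (hw : w ≠ []) : sig σ' c w c = 0 := by
  cases w with
  | nil => simp at hw
  | cons i u => rw [sig_cons, integral_same]

end

lemma hasDerivAt_param_upper {f f' : ℝ → ℝ → ℝ}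
    (hf : Continuous fun p : ℝ × ℝ => f p.1 p.2)
    (hf' : Continuous fun p : ℝ × ℝ => f' p.1 p.2)
    (hd : ∀ B s, HasDerivAt (fun x => f x s) (f' B s) B) (t B₀ : ℝ) :
    HasDerivAt (fun B => ∫ s in t..B, f B s) (f B₀ B₀ + ∫ s in t..B₀, f' B₀ s) B₀ := by
  have hfc : ∀ B, Continuous fun s => f B s := fun B =>
    hf.comp (continuous_const.prodMk continuous_id)
  have hfc' : ∀ B, Continuous fun s => f' B s := fun B =>
    hf'.comp (continuous_const.prodMk continuous_id)
  have hint : ∀ B u v, IntervalIntegrable (fun s => f B s - f B₀ s) volume u v :=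
    fun B u v => ((hfc B).sub (hfc B₀)).intervalIntegrable u v
  have decomp : ∀ B, (∫ s in t..B, f B s) = (∫ s in t..B, f B₀ s) +
      ((∫ s in t..B₀, (f B s - f B₀ s)) + ∫ s in B₀..B, (f B s - f B₀ s)) := by
    intro B
    rw [integral_add_adjacent_intervals (hint B t B₀) (hint B B₀ B),
      integral_sub ((hfc B).intervalIntegrable t B) ((hfc B₀).intervalIntegrable t B)]
    ring
  have P1 : HasDerivAt (fun B => ∫ s in t..B, f B₀ s) (f B₀ B₀) B₀ :=
    integral_hasDerivAt_right ((hfc B₀).intervalIntegrable t B₀)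
      ((hfc B₀).stronglyMeasurableAtFilter _ _) (hfc B₀).continuousAt
  -- P2 : fixed endpoints, differentiate under the integral
  obtain ⟨C, hC⟩ : ∃ C, ∀ p ∈ (Set.Icc (B₀ - 1) (B₀ + 1)) ×ˢ Set.uIcc t B₀,
      ‖f' p.1 p.2‖ ≤ C :=
    (isCompact_Icc.prod isCompact_uIcc).exists_bound_of_continuousOn hf'.continuousOn
  have P2 : HasDerivAt (fun B => ∫ s in t..B₀, (f B s - f B₀ s))
      (∫ s in t..B₀, f' B₀ s) B₀ := by
    have := (hasDerivAt_integral_of_dominated_loc_of_deriv_le (𝕜 := ℝ)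
      (F := fun B s => f B s - f B₀ s) (F' := fun B s => f' B s) (x₀ := B₀)
      (a := t) (b := B₀) (bound := fun _ => C) (Metric.ball_mem_nhds B₀ one_pos)
      (Filter.Eventually.of_forall fun x => ((hfc x).sub (hfc B₀)).aestronglyMeasurable)
      (hint B₀ t B₀)
      (hfc' B₀).aestronglyMeasurable
      (Filter.Eventually.of_forall fun s hs x hx => by
        apply hC (x, s)
        constructor
        · simp only [Metric.mem_ball, Real.dist_eq] at hx
          constructor <;> [linarith [abs_le.1 hx.le |>.1]; linarith [abs_le.1 hx.le |>.2]]
        · exact Set.uIoc_subset_uIcc hs)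
      (intervalIntegrable_const)
      (Filter.Eventually.of_forall fun s _ x _ => ((hd x s).sub_const (f B₀ s))))
    exact this.2
  have P3 : HasDerivAt (fun B => ∫ s in B₀..B, (f B s - f B₀ s)) 0 B₀ := by
    rw [hasDerivAt_iff_isLittleO]
    simp only [integral_same, sub_zero, smul_zero, Asymptotics.isLittleO_iff]
    intro c hc
    have hcont : ContinuousAt (fun p : ℝ × ℝ => f p.1 p.2 - f B₀ p.2) (B₀, B₀) :=
      (hf.sub (hf.comp (continuous_const.prodMk continuous_snd))).continuousAt
    have h0 : (fun p : ℝ × ℝ => f p.1 p.2 - f B₀ p.2) (B₀, B₀) = 0 := by simp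
    rcases Metric.continuousAt_iff.1 hcont (c / 2) (by linarith) with ⟨δ, hδ, hball⟩
    rw [Metric.eventually_nhds_iff]
    refine ⟨δ, hδ, fun B hB => ?_⟩
    have hB' : |B - B₀| < δ := by rwa [Real.dist_eq] at hB
    have key : ∀ s ∈ Set.uIoc B₀ B, ‖f B s - f B₀ s‖ ≤ c / 2 := by
      intro s hs
      have h1 : B₀ ⊓ B < s := hs.1
      have h2 : s ≤ B₀ ⊔ B := hs.2
      have hsB : |s - B₀| ≤ |B - B₀| := by
        rcases le_total B₀ B with h | h
        · rw [inf_of_le_left h] at h1; rw [sup_of_le_right h] at h2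
          rw [abs_of_nonneg (by linarith), abs_of_nonneg (by linarith)]; linarith
        · rw [inf_of_le_right h] at h1; rw [sup_of_le_left h] at h2
          rw [abs_of_nonpos (by linarith), abs_of_nonpos (by linarith)]; linarith
      have hd2 : dist ((B : ℝ), s) ((B₀ : ℝ), B₀) < δ := by
        rw [Prod.dist_eq]
        simp only [Real.dist_eq]
        exact max_lt hB' (lt_of_le_of_lt hsB hB')
      have h3 := hball hd2
      rw [show f ((B₀ : ℝ), (B₀ : ℝ)).1 ((B₀ : ℝ), (B₀ : ℝ)).2 - f B₀ ((B₀ : ℝ), (B₀ : ℝ)).2 = 0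
        by simp, dist_zero_right] at h3
      simpa using h3.le
    calc ‖∫ s in B₀..B, (f B s - f B₀ s)‖ ≤ c / 2 * |B - B₀| :=
          intervalIntegral.norm_integral_le_of_norm_le_const key
      _ ≤ c * ‖B - B₀‖ := by
          rw [Real.norm_eq_abs]; nlinarith [abs_nonneg (B - B₀)]
  have total := P1.add (P2.add P3)
  rw [add_zero] at total
  rw [show (fun B => ∫ s in t..B, f B s) = _ from funext decomp]
  exact total

lemma eq_of_same_deriv {F G D : ℝ → ℝ} (hF : ∀ x, HasDerivAt F (D x) x)
    (hG : ∀ x, HasDerivAt G (D x) x) {c : ℝ} (hc : F c = G c) : F = G := by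
  funext x
  have hdiff : Differentiable ℝ (fun y => F y - G y) := fun y => ((hF y).sub (hG y)).differentiableAt
  have hz : ∀ y, deriv (fun y => F y - G y) y = 0 := by
    intro y
    rw [((hF y).fun_sub (hG y)).deriv]
    ring
  have := is_const_of_deriv_eq_zero hdiff hz x c
  simp only [hc] at this
  linarith [this]

section
variable {d : ℕ} {σ' : ℝ → Fin d → ℝ} (hσ : ∀ i, Continuous fun t => σ' t i)

include hσ in
lemma hasDerivAt_sig_upper : ∀ (w : List (Fin d)) (hw : w ≠ []) (t B₀ : ℝ),
    HasDerivAt (fun B => sig σ' B w t)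
      (σ' B₀ (w.getLast hw) * sig σ' B₀ w.dropLast t) B₀ := by
  intro w
  induction w with
  | nil => intro hw; exact absurd rfl hw
  | cons i u ih =>
    intro hw t B₀
    cases u with
    | nil =>
      have : (fun B => sig σ' B [i] t) = fun B => ∫ s in t..B, σ' s i * 1 := by
        funext B; rw [sig_cons]; simp [sig_nil]
      rw [this]
      have hct : Continuous fun s => σ' s i * 1 := by simpa using hσ i
      have := integral_hasDerivAt_right (hct.intervalIntegrable t B₀)
        (hct.stronglyMeasurableAtFilter _ _) hct.continuousAt
      simpa [sig_nil] using this
    | cons j u' =>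
      set u := j :: u' with hu
      have hune : u ≠ [] := by simp [hu]
      have key := hasDerivAt_param_upper
        (f := fun B s => σ' s i * sig σ' B u s)
        (f' := fun B s => σ' s i * (σ' B (u.getLast hune) * sig σ' B u.dropLast s))
        (((hσ i).comp continuous_snd).mul
          ((sig_cont2 hσ u).comp (continuous_fst.prodMk continuous_snd)))
        (((hσ i).comp continuous_snd).mul
          (((hσ (u.getLast hune)).comp continuous_fst).mul
            ((sig_cont2 hσ u.dropLast).comp (continuous_fst.prodMk continuous_snd))))
        (fun B s => (ih hune s B).const_mul (σ' s i)) t B₀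
      have e1 : σ' B₀ i * sig σ' B₀ u B₀ = 0 := by rw [sig_same B₀ hune]; ring
      have e2 : (∫ s in t..B₀, σ' s i * (σ' B₀ (u.getLast hune) * sig σ' B₀ u.dropLast s))
          = σ' B₀ ((i :: u).getLast hw) * sig σ' B₀ ((i :: u).dropLast) t := by
        rw [show ((i :: u).getLast hw) = u.getLast hune from List.getLast_cons hune]
        rw [show ((i :: u).dropLast) = i :: u.dropLast by
          simp [hu]]
        rw [sig_cons]
        rw [← intervalIntegral.integral_const_mul]
        congr 1; funext s; ring
      rw [e1, zero_add, e2] at key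
      exact key

include hσ in
lemma sig_append (v : List (Fin d)) (i : Fin d) (t : ℝ) :
    (fun s => sig σ' s (v ++ [i]) t) = fun s => ∫ q in t..s, σ' q i * sig σ' q v t := by
  have hcn : Continuous fun q => σ' q i * sig σ' q v t := (hσ i).mul (sig_cont_b hσ t v)
  apply eq_of_same_deriv (D := fun s => σ' s i * sig σ' s v t) (c := t)
  · intro x
    have h := hasDerivAt_sig_upper hσ (v ++ [i]) (by simp) t x
    rwa [List.getLast_append, List.dropLast_concat] at h
  · intro x
    exact integral_hasDerivAt_right (hcn.intervalIntegrable t x)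
      (hcn.stronglyMeasurableAtFilter _ _) hcn.continuousAt
  · rw [sig_same t (by simp), intervalIntegral.integral_same]

end

section
variable {d : ℕ} {σ' : ℝ → Fin d → ℝ} (hσ : ∀ i, Continuous fun t => σ' t i)

include hσ in
lemma hasDerivAt_sig_lower (B : ℝ) (i : Fin d) (w : List (Fin d)) (t₀ : ℝ) :
    HasDerivAt (fun t => sig σ' B (i :: w) t) (-(σ' t₀ i * sig σ' B w t₀)) t₀ := by
  have hc : Continuous fun s => σ' s i * sig σ' B w s := (hσ i).mul (sig_cont_t hσ B w)
  have h := integral_hasDerivAt_left (hc.intervalIntegrable t₀ B)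
    (hc.stronglyMeasurableAtFilter _ _) hc.continuousAt
  simpa only [sig_cons] using h

include hσ in
lemma sig_reverse (a b : ℝ) (w : List (Fin d)) : ∀ t,
    sig (fun s i => -σ' (a + b - s) i) b w t
      = (-1 : ℝ) ^ w.length * sig σ' (a + b - t) w.reverse a := by
  induction w with
  | nil => intro t; simp [sig_nil]
  | cons i u ih =>
    intro t
    rw [sig_cons]
    have step1 : (∫ s in t..b, (fun s i => -σ' (a + b - s) i) s i
          * sig (fun s i => -σ' (a + b - s) i) b u s)
        = ∫ s in t..b, (-1 : ℝ) ^ (u.length + 1)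
          * (σ' (a + b - s) i * sig σ' (a + b - s) u.reverse a) := by
      congr 1
      funext s
      rw [ih s]
      ring
    rw [step1, intervalIntegral.integral_const_mul]
    have step2 : (∫ s in t..b, σ' (a + b - s) i * sig σ' (a + b - s) u.reverse a)
        = ∫ q in a..(a + b - t), σ' q i * sig σ' q u.reverse a := by
      have := intervalIntegral.integral_comp_sub_left
        (a := t) (b := b) (fun q => σ' q i * sig σ' q u.reverse a) (a + b)
      rw [this]
      norm_num
    rw [step2, ← congrFun (sig_append hσ u.reverse i a) (a + b - t)]
    rw [List.reverse_cons, List.length_cons]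

end

noncomputable def Gf {d : ℕ} (σ' : ℝ → Fin d → ℝ) (b : ℝ) (w : List (Fin d)) (t : ℝ) : ℝ :=
  ∑ n ∈ Finset.range (w.length + 1),
    sig σ' b (w.take n) t * ((-1 : ℝ) ^ (w.drop n).length * sig σ' b (w.drop n).reverse t)

lemma take_of_lt {α : Type*} (w : List α) (hw : w ≠ []) {n : ℕ} (hn : n < w.length) :
    w.take n = w.dropLast.take n := by
  conv_lhs => rw [← List.dropLast_append_getLast hw]
  rw [List.take_append_of_le_length (by simp [List.length_dropLast]; omega)]

lemma drop_of_lt {α : Type*} (w : List α) (hw : w ≠ []) {n : ℕ} (hn : n < w.length) :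
    w.drop n = w.dropLast.drop n ++ [w.getLast hw] := by
  conv_lhs => rw [← List.dropLast_append_getLast hw]
  rw [List.drop_append_of_le_length (by simp [List.length_dropLast]; omega)]

section
variable {d : ℕ} {σ' : ℝ → Fin d → ℝ} (hσ : ∀ i, Continuous fun t => σ' t i)

include hσ in
lemma Gf_eq (b : ℝ) : ∀ (m : ℕ) (w : List (Fin d)), w.length ≤ m → ∀ t : ℝ,
    Gf σ' b w t = if w = [] then 1 else 0 := by
  intro m
  induction m with
  | zero =>
    intro w hw t
    rw [List.length_eq_zero_iff.1 (Nat.le_zero.1 hw)]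
    simp [Gf, sig_nil]
  | succ m ih =>
    intro w hw t
    match w, hw with
    | [], _ => simp [Gf, sig_nil]
    | i :: u, hw =>
      set w := i :: u with hwdef
      have hwne : w ≠ [] := by simp [hwdef]
      set l := w.getLast hwne with hldef
      set k := w.length with hkdef
      have hku : k = u.length + 1 := by simp [hkdef, hwdef]
      have hdl : w.dropLast.length = u.length := by simp [hwdef]
      set D : ℕ → ℝ → ℝ := fun n t =>
        (if n = 0 then 0 else -(σ' t i * sig σ' b ((w.take n).tail) t))
            * ((-1 : ℝ) ^ (w.drop n).length * sig σ' b (w.drop n).reverse t)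
        + sig σ' b (w.take n) t * (if n = k then 0 else
            (-1 : ℝ) ^ (w.drop n).length
              * -(σ' t l * sig σ' b ((w.dropLast.drop n).reverse) t)) with hD
      have hterm : ∀ t : ℝ, ∀ n ∈ Finset.range (k + 1),
          HasDerivAt (fun t => sig σ' b (w.take n) t
            * ((-1 : ℝ) ^ (w.drop n).length * sig σ' b (w.drop n).reverse t)) (D n t) t := by
        intro t n hn
        have hn' : n ≤ k := by simpa using Nat.lt_succ_iff.1 (Finset.mem_range.1 hn)
        have hA : HasDerivAt (fun t => sig σ' b (w.take n) t)
            (if n = 0 then 0 else -(σ' t i * sig σ' b ((w.take n).tail) t)) t := by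
          rcases n with _ | m'
          · simp only [List.take_zero, sig_nil, if_pos rfl]
            exact hasDerivAt_const t 1
          · have he : w.take (m' + 1) = i :: u.take m' := by simp [hwdef]
            rw [if_neg (Nat.succ_ne_zero m'), he]
            simpa using hasDerivAt_sig_lower hσ b i (u.take m') t
        have hB : HasDerivAt (fun t => (-1 : ℝ) ^ (w.drop n).length
              * sig σ' b (w.drop n).reverse t)
            (if n = k then 0 else (-1 : ℝ) ^ (w.drop n).length
              * -(σ' t l * sig σ' b ((w.dropLast.drop n).reverse) t)) t := by
          by_cases hnk : n = k
          · subst hnk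
            simp only [hkdef, List.drop_length, List.reverse_nil, sig_nil, if_pos rfl]
            exact hasDerivAt_const t _
          · have hlt : n < w.length := lt_of_le_of_ne hn' hnk
            have hdn : w.drop n = w.dropLast.drop n ++ [l] := drop_of_lt w hwne hlt
            rw [if_neg hnk]
            have hrev : (w.drop n).reverse = l :: (w.dropLast.drop n).reverse := by
              rw [hdn]; simp
            rw [hrev]
            exact (hasDerivAt_sig_lower hσ b l ((w.dropLast.drop n).reverse) t).const_mul _
        exact hA.mul hB
      have hsum : ∀ t : ℝ, HasDerivAt (fun t => Gf σ' b w t)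
          (∑ n ∈ Finset.range (k + 1), D n t) t := by
        intro t
        have := HasDerivAt.fun_sum (hterm t)
        simpa [Gf] using this
      have hDval : ∀ t : ℝ, (∑ n ∈ Finset.range (k + 1), D n t)
          = -σ' t i * Gf σ' b u t + σ' t l * Gf σ' b w.dropLast t := by
        intro t
        rw [hD, Finset.sum_add_distrib]
        congr 1
        · rw [hku, Finset.sum_range_succ']
          rw [if_pos rfl, zero_mul, add_zero]
          rw [Gf, Finset.mul_sum]
          apply Finset.sum_congr rfl
          intro n hn
          rw [if_neg (Nat.succ_ne_zero n)]
          have h1 : w.take (n + 1) = i :: u.take n := by simp [hwdef]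
          have h2 : w.drop (n + 1) = u.drop n := by simp [hwdef]
          rw [h1, h2]
          simp only [List.tail_cons]
          ring
        · rw [show k + 1 = (w.dropLast.length + 1) + 1 by omega, Finset.sum_range_succ]
          rw [if_pos (by omega : w.dropLast.length + 1 = k), mul_zero, add_zero]
          rw [Gf, Finset.mul_sum]
          apply Finset.sum_congr rfl
          intro n hn
          have hlt : n < w.length := by
            have := Finset.mem_range.1 hn; omega
          have hnk : ¬ (n = k) := by omega
          rw [if_neg hnk, take_of_lt w hwne hlt]
          have hlen : (w.drop n).length = (w.dropLast.drop n).length + 1 := by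
            rw [drop_of_lt w hwne hlt]; simp
          rw [hlen, pow_succ]
          ring
      have hzero : ∀ t : ℝ, HasDerivAt (fun t => Gf σ' b w t) 0 t := by
        intro t
        have h := hsum t
        rw [hDval t] at h
        rcases List.eq_nil_or_concat u with hu | hu
        · subst hu
          have hl : l = i := by simp [hldef, hwdef]
          have hdl0 : w.dropLast = [] := by simp [hwdef]
          rw [hl, hdl0] at h
          simpa [Gf, sig_nil] using h
        · have hune : u ≠ [] := by
            rcases hu with ⟨L, x, rfl⟩; simp
          have hdlne : w.dropLast ≠ [] := by
            intro hnil
            rw [hnil] at hdl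
            exact hune (List.length_eq_zero_iff.1 hdl.symm)
          rw [ih u (by omega) t, ih w.dropLast (by omega) t] at h
          rw [if_neg hune, if_neg hdlne] at h
          simpa using h
      have hconst : Gf σ' b w t = Gf σ' b w b :=
        is_const_of_deriv_eq_zero (fun y => (hzero y).differentiableAt)
          (fun y => (hzero y).deriv) t b
      have hb : Gf σ' b w b = 0 := by
        rw [Gf]
        apply Finset.sum_eq_zero
        intro n hn
        rcases n with _ | m'
        · have hrne : w.reverse ≠ [] := by simp [hwdef]
          rw [List.drop_zero, sig_same b hrne]
          ring
        · have he : w.take (m' + 1) = i :: u.take m' := by simp [hwdef]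
          rw [he, sig_same b (List.cons_ne_nil _ _)]
          ring
      rw [hconst, hb, if_neg hwne]

end

/-- Product of tensor series over `ℝ^d` by word coefficients:
`(A ⊗ B)_k = ∑_ℓ a_ℓ ⊗ b_{k-ℓ}`. -/
def tmul {d : ℕ} (A B : List (Fin d) → ℝ) : List (Fin d) → ℝ :=
  fun w => ∑ n ∈ Finset.range (w.length + 1), A (w.take n) * B (w.drop n)

/-- The unit `1 = (1,0,0,…)` of the tensor algebra. -/
def tone {d : ℕ} : List (Fin d) → ℝ := fun w => if w = [] then 1 else 0

/-- The tensor exponential `exp_⊗(v) = ∑_k v^{⊗k}/k!` by word coefficients. -/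
noncomputable def texp {d : ℕ} (v : Fin d → ℝ) : List (Fin d) → ℝ :=
  fun w => (w.map v).prod / (Nat.factorial w.length : ℝ)

lemma map_neg_prod {d : ℕ} (v : Fin d → ℝ) : ∀ l : List (Fin d),
    (l.map fun i => -v i).prod = (-1 : ℝ) ^ l.length * (l.map v).prod := by
  intro l
  induction l with
  | nil => simp
  | cons j l ih =>
    simp only [List.map_cons, List.prod_cons, List.length_cons, ih, pow_succ]
    ring

lemma texp_inverse {d : ℕ} (v : Fin d → ℝ) :
    tmul (texp v) (texp (fun i => -v i)) = tone := by
  funext w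
  by_cases hw : w = []
  · subst hw
    simp [tmul, texp, tone]
  · set k := w.length with hk
    have hk0 : k ≠ 0 := by
      simpa [hk] using fun h => hw (List.length_eq_zero_iff.1 h)
    rw [tmul, tone, if_neg hw]
    have hstep : ∀ n ∈ Finset.range (k + 1),
        texp v (w.take n) * texp (fun i => -v i) (w.drop n)
          = ((w.map v).prod * ((-1 : ℝ) ^ k / (Nat.factorial k : ℝ)))
            * ((-1 : ℝ) ^ n * (k.choose n : ℝ)) := by
      intro n hn
      have hn' : n ≤ k := Nat.lt_succ_iff.1 (Finset.mem_range.1 hn)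
      rw [texp, texp, map_neg_prod]
      have hlt : (w.take n).length = n := by
        rw [List.length_take]; omega
      have hld : (w.drop n).length = k - n := by rw [List.length_drop]
      rw [hlt, hld]
      have hprod : ((w.take n).map v).prod * ((w.drop n).map v).prod = (w.map v).prod := by
        rw [← List.prod_append, ← List.map_append, List.take_append_drop]
      have hfac : (k.choose n : ℝ) * (Nat.factorial n : ℝ) * (Nat.factorial (k - n) : ℝ)
          = (Nat.factorial k : ℝ) := by
        exact_mod_cast congrArg (fun x : ℕ => (x : ℝ))
          (Nat.choose_mul_factorial_mul_factorial hn')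
      have hsq : ((-1 : ℝ) ^ n) * ((-1 : ℝ) ^ n) = 1 := by
        rw [← pow_add, ← two_mul, pow_mul]
        norm_num
      have hsign : (-1 : ℝ) ^ (k - n) = (-1 : ℝ) ^ k * (-1 : ℝ) ^ n := by
        have h1 : (-1 : ℝ) ^ (k - n) * (-1 : ℝ) ^ n = (-1 : ℝ) ^ k := by
          rw [← pow_add]
          congr 1
          omega
        calc (-1 : ℝ) ^ (k - n) = (-1 : ℝ) ^ (k - n) * (((-1 : ℝ) ^ n) * ((-1 : ℝ) ^ n)) := by
              rw [hsq, mul_one]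
          _ = (-1 : ℝ) ^ k * (-1 : ℝ) ^ n := by rw [← mul_assoc, h1]
      rw [hsign]
      have hnf : (Nat.factorial n : ℝ) ≠ 0 := Nat.cast_ne_zero.2 (Nat.factorial_ne_zero n)
      have hknf : (Nat.factorial (k - n) : ℝ) ≠ 0 := Nat.cast_ne_zero.2 (Nat.factorial_ne_zero _)
      have hkf : (Nat.factorial k : ℝ) ≠ 0 := Nat.cast_ne_zero.2 (Nat.factorial_ne_zero k)
      have hprod' : (List.take n (List.map v w)).prod * (List.drop n (List.map v w)).prod
          = (List.map v w).prod := by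
        rw [← List.prod_append, List.take_append_drop]
      field_simp
      linear_combination (Nat.factorial k : ℝ) * hprod
        - (List.map v w).prod * hfac
    rw [Finset.sum_congr rfl hstep, ← Finset.mul_sum]
    have hz : (∑ n ∈ Finset.range (k + 1), (-1 : ℝ) ^ n * (k.choose n : ℝ)) = 0 := by
      have := Int.alternating_sum_range_choose_of_ne hk0
      exact_mod_cast congrArg (fun x : ℤ => (x : ℝ)) this
    rw [hz, mul_zero]

/-- The signature of the reversed path is the tensor-algebra inverse of the signature:
for `X` on `[a,b]` with derivative `σ'`, the reversed path `X⁻¹(t) = X(a+b−t)` has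
derivative `t ↦ −σ'(a+b−t)`, and `S(X) ⊗ S(X⁻¹) = 1 = (1,0,0,…)`. Moreover, for a single
linear segment with increment `v` (signature `exp_⊗(v)`), the reversed segment has
signature `exp_⊗(−v)` and `exp_⊗(v) ⊗ exp_⊗(−v) = 1`. -/
theorem reversed_path_signature_inverse (d : ℕ) (a b : ℝ) (hab : a ≤ b)
    (σ' : ℝ → Fin d → ℝ) (hσc : ∀ i, Continuous fun t => σ' t i) :
    tmul (fun w => sig σ' b w a)
        (fun w => sig (fun t i => -σ' (a + b - t) i) b w a) = tone ∧
    ∀ v : Fin d → ℝ, tmul (texp v) (texp (fun i => -v i)) = tone := by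
  constructor
  · funext w
    have h1 : ∀ u : List (Fin d), sig (fun t i => -σ' (a + b - t) i) b u a
        = (-1 : ℝ) ^ u.length * sig σ' b u.reverse a := by
      intro u
      have := sig_reverse hσc a b u a
      rwa [show a + b - a = b by ring] at this
    calc tmul (fun w => sig σ' b w a)
          (fun w => sig (fun t i => -σ' (a + b - t) i) b w a) w
        = Gf σ' b w a := by
          rw [tmul, Gf]
          apply Finset.sum_congr rfl
          intro n hn
          rw [h1]
      _ = tone w := by rw [Gf_eq hσc b w.length w le_rfl a]; rfl
  · exact texp_inverse
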